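/- arXiv:2001.03686 — 4 statements merged into one kernel-verified Lean document; each statement's English description precedes it below -/
import Mathlib

section
/- Assume additionally that α and β are nonnegative on K. Then there exist positive real numbers B₁ and B₂ such that for all M ≥ B₁, all N ≥ B₂, and all x ∈ K: g₁(x, 0, v) ≥ 0 and g₁(x, M, v) < 0 for every v ∈ [0, N], and g₂(x, u, 0) ≥ 0 and g₂(x, u, N) < 0 for every u ∈ [0, M]. (These are the invariant-rectangle inequalities established in Proposition 2.1.) -/
/-- Proposition 2.1 (invariant-rectangle inequalities): with
`g₁(x,u,v) = (m x − α x − u)·u + (β x − b·u)·v` and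
`g₂(x,u,v) = (m x − β x − v)·v + (α x − c·v)·u`, assuming `α, β ≥ 0` on the
nonempty compact space `K`, there are `B₁, B₂ > 0` such that for all
`M ≥ B₁`, `N ≥ B₂` and all `x ∈ K` the stated sign conditions hold. -/
theorem stmt_0 {K : Type*} [TopologicalSpace K] [CompactSpace K] [Nonempty K]
    (m α β : K → ℝ) (hm : Continuous m) (hα : Continuous α) (hβ : Continuous β)
    (b c : ℝ) (hb : 0 < b) (hc : 0 < c)
    (hαnn : ∀ x, 0 ≤ α x) (hβnn : ∀ x, 0 ≤ β x)
    (g₁ g₂ : K → ℝ → ℝ → ℝ)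
    (hg₁ : ∀ x u v, g₁ x u v = (m x - α x - u) * u + (β x - b * u) * v)
    (hg₂ : ∀ x u v, g₂ x u v = (m x - β x - v) * v + (α x - c * v) * u) :
    ∃ B₁ B₂ : ℝ, 0 < B₁ ∧ 0 < B₂ ∧
      ∀ M, B₁ ≤ M → ∀ N, B₂ ≤ N → ∀ x : K,
        (∀ v ∈ Set.Icc (0 : ℝ) N, 0 ≤ g₁ x 0 v ∧ g₁ x M v < 0) ∧
        (∀ u ∈ Set.Icc (0 : ℝ) M, 0 ≤ g₂ x u 0 ∧ g₂ x u N < 0) := by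
  obtain ⟨xm, -, hxm'⟩ := isCompact_univ.exists_isMaxOn Set.univ_nonempty hm.continuousOn
  obtain ⟨xa, -, hxa'⟩ := isCompact_univ.exists_isMaxOn Set.univ_nonempty hα.continuousOn
  obtain ⟨xb, -, hxb'⟩ := isCompact_univ.exists_isMaxOn Set.univ_nonempty hβ.continuousOn
  have hxm : ∀ y, m y ≤ m xm := fun y => hxm' (Set.mem_univ y)
  have hxa : ∀ y, α y ≤ α xa := fun y => hxa' (Set.mem_univ y)
  have hxb : ∀ y, β y ≤ β xb := fun y => hxb' (Set.mem_univ y)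
  refine ⟨max (m xm + 1) (β xb / b + 1), max (m xm + 1) (α xa / c + 1), ?_, ?_, ?_⟩
  · have h0 : (0:ℝ) ≤ β xb / b := div_nonneg (hβnn xb) hb.le
    exact lt_max_of_lt_right (by linarith)
  · have h0 : (0:ℝ) ≤ α xa / c := div_nonneg (hαnn xa) hc.le
    exact lt_max_of_lt_right (by linarith)
  · intro M hM N hN x
    have hM1 : m xm + 1 ≤ M := le_trans (le_max_left _ _) hM
    have hM2 : β xb / b + 1 ≤ M := le_trans (le_max_right _ _) hM
    have hN1 : m xm + 1 ≤ N := le_trans (le_max_left _ _) hN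
    have hN2 : α xa / c + 1 ≤ N := le_trans (le_max_right _ _) hN
    have hMpos : 0 < M := lt_of_lt_of_le (by have := div_nonneg (hβnn xb) hb.le; linarith) hM2
    have hNpos : 0 < N := lt_of_lt_of_le (by have := div_nonneg (hαnn xa) hc.le; linarith) hN2
    have hmx := hxm x
    have hax := hxa x
    have hbx := hxb x
    have hbM : b * M ≥ β x := by
      have : b * (β xb / b + 1) = β xb + b := by field_simp
      nlinarith [hb.le]
    have hcN : c * N ≥ α x := by
      have : c * (α xa / c + 1) = α xa + c := by field_simp
      nlinarith [hc.le]
    constructor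
    · rintro v ⟨hv0, hvN⟩
      refine ⟨?_, ?_⟩
      · rw [hg₁]; nlinarith [hβnn x]
      · rw [hg₁]
        have h1 : (m x - α x - M) * M ≤ -M := by nlinarith [hαnn x]
        have h2 : (β x - b * M) * v ≤ 0 := mul_nonpos_of_nonpos_of_nonneg (by linarith) hv0
        linarith
    · rintro u ⟨hu0, huM⟩
      refine ⟨?_, ?_⟩
      · rw [hg₂]; nlinarith [hαnn x]
      · rw [hg₂]
        have h1 : (m x - β x - N) * N ≤ -N := by nlinarith [hβnn x]
        have h2 : (α x - c * N) * u ≤ 0 := mul_nonpos_of_nonpos_of_nonneg (by linarith) hu0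
        linarith
end

section
/- Assume m̲ > 0, α̲ > 0, β̲ > 0, set k = min{α̲/ᾱ, β̲/β̄}, and suppose k > max{1 − m̲/(b·m̄), 1 − m̲/(c·m̄)} and that m̲ + b(k−1)·m̄ − ᾱ − β̄/b > 0 and m̲ + c(k−1)·m̄ − β̄ − ᾱ/c > 0. Then for every x ∈ K: g₁(x, m̄, v) < 0 for all v ∈ [0, m̄]; g₂(x, u, m̄) < 0 for all u ∈ [0, m̄]; g₁(x, β̄/b, v) > 0 for all v ∈ [ᾱ/c, m̄]; and g₂(x, u, ᾱ/c) > 0 for all u ∈ [β̄/b, m̄]. (These are the estimates proved in Proposition 2.2(1), showing the rectangle (β̄/b, m̄] × (ᾱ/c, m̄] is invariant and attracting for the reaction terms.) -/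
set_option maxHeartbeats 1000000 in
/-- Proposition 2.2(1): under positivity of `m̲, α̲, β̲` and the smallness
conditions on the oscillation of `α, β` (via `k`), the rectangle
`(β̄/b, m̄] × (ᾱ/c, m̄]` is invariant and attracting for the reaction terms. -/
theorem stmt_3 {K : Type*} [TopologicalSpace K] [CompactSpace K] [Nonempty K]
    (m α β : K → ℝ) (hm : Continuous m) (hα : Continuous α) (hβ : Continuous β)
    (b c : ℝ) (hb : 0 < b) (hc : 0 < c)
    (g₁ g₂ : K → ℝ → ℝ → ℝ)
    (hg₁ : ∀ x u v, g₁ x u v = (m x - α x - u) * u + (β x - b * u) * v)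
    (hg₂ : ∀ x u v, g₂ x u v = (m x - β x - v) * v + (α x - c * v) * u)
    (mlo mhi αlo αhi βlo βhi : ℝ)
    (hmlo : IsLeast (Set.range m) mlo) (hmhi : IsGreatest (Set.range m) mhi)
    (hαlo : IsLeast (Set.range α) αlo) (hαhi : IsGreatest (Set.range α) αhi)
    (hβlo : IsLeast (Set.range β) βlo) (hβhi : IsGreatest (Set.range β) βhi)
    (hmpos : 0 < mlo) (hαpos : 0 < αlo) (hβpos : 0 < βlo)
    (k : ℝ) (hk : k = min (αlo / αhi) (βlo / βhi))
    (hkbig : k > max (1 - mlo / (b * mhi)) (1 - mlo / (c * mhi)))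
    (hS1a : 0 < mlo + b * (k - 1) * mhi - αhi - βhi / b)
    (hS1b : 0 < mlo + c * (k - 1) * mhi - βhi - αhi / c) :
    ∀ x : K,
      (∀ v ∈ Set.Icc (0 : ℝ) mhi, g₁ x mhi v < 0) ∧
      (∀ u ∈ Set.Icc (0 : ℝ) mhi, g₂ x u mhi < 0) ∧
      (∀ v ∈ Set.Icc (αhi / c) mhi, 0 < g₁ x (βhi / b) v) ∧
      (∀ u ∈ Set.Icc (βhi / b) mhi, 0 < g₂ x u (αhi / c)) := by
  intro x
  have hm1 : mlo ≤ m x := hmlo.2 ⟨x, rfl⟩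
  have hm2 : m x ≤ mhi := hmhi.2 ⟨x, rfl⟩
  have hα1 : αlo ≤ α x := hαlo.2 ⟨x, rfl⟩
  have hα2 : α x ≤ αhi := hαhi.2 ⟨x, rfl⟩
  have hβ1 : βlo ≤ β x := hβlo.2 ⟨x, rfl⟩
  have hβ2 : β x ≤ βhi := hβhi.2 ⟨x, rfl⟩
  have hαhipos : 0 < αhi := lt_of_lt_of_le hαpos (le_trans hα1 hα2)
  have hβhipos : 0 < βhi := lt_of_lt_of_le hβpos (le_trans hβ1 hβ2)
  have hmhipos : 0 < mhi := lt_of_lt_of_le hmpos (le_trans hm1 hm2)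
  have hkα : k * αhi ≤ αlo := by
    have h := min_le_left (αlo / αhi) (βlo / βhi)
    rw [← hk] at h
    exact (le_div_iff₀ hαhipos).mp h
  have hkβ : k * βhi ≤ βlo := by
    have h := min_le_right (αlo / αhi) (βlo / βhi)
    rw [← hk] at h
    exact (le_div_iff₀ hβhipos).mp h
  have hk1 : k ≤ 1 := by
    nlinarith [le_trans hβ1 hβ2]
  have hβbm : βhi / b ≤ mhi := by
    nlinarith [mul_pos hb hmhipos]
  have hαcm : αhi / c ≤ mhi := by
    nlinarith [mul_pos hc hmhipos]
  have hβb : βhi = b * (βhi / b) := by field_simp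
  have hαc : αhi = c * (αhi / c) := by field_simp
  have hbb : b * (βhi / b) = βhi := by field_simp
  have hcc : c * (αhi / c) = αhi := by field_simp
  have hβbm' : βhi ≤ b * mhi := by linarith [(div_le_iff₀ hb).mp hβbm]
  have hαcm' : αhi ≤ c * mhi := by linarith [(div_le_iff₀ hc).mp hαcm]
  refine ⟨?_, ?_, ?_, ?_⟩
  · intro v hv
    obtain ⟨hv0, hv1⟩ := hv
    rw [hg₁]
    have h2 : (β x - b * mhi) * v ≤ 0 :=
      mul_nonpos_of_nonpos_of_nonneg (by linarith) hv0
    have h1 : (m x - α x - mhi) * mhi ≤ (-αlo) * mhi :=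
      mul_le_mul_of_nonneg_right (by linarith) hmhipos.le
    nlinarith [mul_pos hαpos hmhipos]
  · intro u hu
    obtain ⟨hu0, hu1⟩ := hu
    rw [hg₂]
    have h2 : (α x - c * mhi) * u ≤ 0 :=
      mul_nonpos_of_nonpos_of_nonneg (by linarith) hu0
    have h1 : (m x - β x - mhi) * mhi ≤ (-βlo) * mhi :=
      mul_le_mul_of_nonneg_right (by linarith) hmhipos.le
    nlinarith [mul_pos hβpos hmhipos]
  · intro v hv
    obtain ⟨hv0, hv1⟩ := hv
    rw [hg₁]
    have hβbpos : 0 < βhi / b := div_pos hβhipos hb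
    have h1 : (mlo - αhi - βhi / b) * (βhi / b) ≤ (m x - α x - βhi / b) * (βhi / b) :=
      mul_le_mul_of_nonneg_right (by linarith) hβbpos.le
    have h2a : (β x - b * (βhi / b)) * mhi ≤ (β x - b * (βhi / b)) * v :=
      mul_le_mul_of_nonpos_left hv1 (by rw [hbb]; linarith)
    have h2b : ((k - 1) * βhi) * mhi ≤ (β x - b * (βhi / b)) * mhi :=
      mul_le_mul_of_nonneg_right (by rw [hbb]; linarith) hmhipos.le
    have key : 0 < (mlo + b * (k - 1) * mhi - αhi - βhi / b) * (βhi / b) :=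
      mul_pos hS1a hβbpos
    have expand : (mlo + b * (k - 1) * mhi - αhi - βhi / b) * (βhi / b)
        = (mlo - αhi - βhi / b) * (βhi / b) + ((k - 1) * (b * (βhi / b))) * mhi := by
      ring
    rw [expand, hbb] at key
    linarith
  · intro u hu
    obtain ⟨hu0, hu1⟩ := hu
    rw [hg₂]
    have hαcpos : 0 < αhi / c := div_pos hαhipos hc
    have h1 : (mlo - βhi - αhi / c) * (αhi / c) ≤ (m x - β x - αhi / c) * (αhi / c) :=
      mul_le_mul_of_nonneg_right (by linarith) hαcpos.le
    have h2a : (α x - c * (αhi / c)) * mhi ≤ (α x - c * (αhi / c)) * u :=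
      mul_le_mul_of_nonpos_left hu1 (by rw [hcc]; linarith)
    have h2b : ((k - 1) * αhi) * mhi ≤ (α x - c * (αhi / c)) * mhi :=
      mul_le_mul_of_nonneg_right (by rw [hcc]; linarith) hmhipos.le
    have key : 0 < (mlo + c * (k - 1) * mhi - βhi - αhi / c) * (αhi / c) :=
      mul_pos hS1b hαcpos
    have expand : (mlo + c * (k - 1) * mhi - βhi - αhi / c) * (αhi / c)
        = (mlo - βhi - αhi / c) * (αhi / c) + ((k - 1) * (c * (αhi / c))) * mhi := by
      ring
    rw [expand, hcc] at key
    linarith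
end

section
/- Assume α̲ > 0 and β̲ > 0, set k₁ = max{β̄/β̲, ᾱ/α̲} ≥ 1, and suppose m̄ − β̲/b + (b(k₁−1) − c)·(α̲/c) < 0 and m̄ − α̲/c + (c(k₁−1) − b)·(β̲/b) < 0. Then for every x ∈ K, every u ∈ [0, β̲/b], and every v ∈ [0, α̲/c]: g₁(x, β̲/b, v) < 0 and g₂(x, u, α̲/c) < 0. (These are the estimates proved in Proposition 2.2(2), showing the rectangle [0, β̲/b] × [0, α̲/c] is invariant for the reaction terms.) -/
/-- Proposition 2.2(2): under the stated conditions involving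
`k₁ = max{β̄/β̲, ᾱ/α̲}`, the rectangle `[0, β̲/b] × [0, α̲/c]` is invariant
for the reaction terms: `g₁(x, β̲/b, v) < 0` and `g₂(x, u, α̲/c) < 0` there. -/
theorem stmt_4 {K : Type*} [TopologicalSpace K] [CompactSpace K] [Nonempty K]
    (m α β : K → ℝ) (hm : Continuous m) (hα : Continuous α) (hβ : Continuous β)
    (b c : ℝ) (hb : 0 < b) (hc : 0 < c)
    (g₁ g₂ : K → ℝ → ℝ → ℝ)
    (hg₁ : ∀ x u v, g₁ x u v = (m x - α x - u) * u + (β x - b * u) * v)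
    (hg₂ : ∀ x u v, g₂ x u v = (m x - β x - v) * v + (α x - c * v) * u)
    (mhi αlo αhi βlo βhi : ℝ)
    (hmhi : IsGreatest (Set.range m) mhi)
    (hαlo : IsLeast (Set.range α) αlo) (hαhi : IsGreatest (Set.range α) αhi)
    (hβlo : IsLeast (Set.range β) βlo) (hβhi : IsGreatest (Set.range β) βhi)
    (hαpos : 0 < αlo) (hβpos : 0 < βlo)
    (k₁ : ℝ) (hk₁ : k₁ = max (βhi / βlo) (αhi / αlo))
    (hS2a : mhi - βlo / b + (b * (k₁ - 1) - c) * (αlo / c) < 0)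
    (hS2b : mhi - αlo / c + (c * (k₁ - 1) - b) * (βlo / b) < 0) :
    ∀ x : K, ∀ u ∈ Set.Icc (0 : ℝ) (βlo / b), ∀ v ∈ Set.Icc (0 : ℝ) (αlo / c),
      g₁ x (βlo / b) v < 0 ∧ g₂ x u (αlo / c) < 0 := by
  intro x u hu v hv
  have hmx := hmhi.2 (Set.mem_range_self x)
  have hαx := hαlo.2 (Set.mem_range_self x)
  have hβx := hβlo.2 (Set.mem_range_self x)
  have hβx' := hβhi.2 (Set.mem_range_self x)
  have hαx' := hαhi.2 (Set.mem_range_self x)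
  have hU : 0 < βlo / b := div_pos hβpos hb
  have hV : 0 < αlo / c := div_pos hαpos hc
  have hUb : b * (βlo / b) = βlo := by field_simp
  have hVc : c * (αlo / c) = αlo := by field_simp
  have hk₁β : βhi ≤ k₁ * βlo := by
    have h : βhi / βlo ≤ k₁ := hk₁ ▸ le_max_left _ _
    exact (div_le_iff₀ hβpos).mp h
  have hk₁α : αhi ≤ k₁ * αlo := by
    have h : αhi / αlo ≤ k₁ := hk₁ ▸ le_max_right _ _
    exact (div_le_iff₀ hαpos).mp h
  have hk₁1 : 1 ≤ k₁ := by nlinarith [le_trans hβx hβx']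
  constructor
  · rw [hg₁, hUb]
    have h1 : (β x - βlo) * v ≤ ((k₁ - 1) * βlo) * (αlo / c) :=
      mul_le_mul (by nlinarith) hv.2 hv.1 (by nlinarith)
    have h2 : (m x - α x - βlo / b) * (βlo / b)
        ≤ (mhi - αlo - βlo / b) * (βlo / b) :=
      mul_le_mul_of_nonneg_right (by linarith) hU.le
    have h3 := mul_lt_mul_of_pos_right hS2a hU
    have e : (mhi - βlo / b + (b * (k₁ - 1) - c) * (αlo / c)) * (βlo / b)
        = (mhi - αlo - βlo / b) * (βlo / b) + (k₁ - 1) * βlo * (αlo / c) := by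
      field_simp; ring
    rw [e, zero_mul] at h3
    linarith
  · rw [hg₂, hVc]
    have h1 : (α x - αlo) * u ≤ ((k₁ - 1) * αlo) * (βlo / b) :=
      mul_le_mul (by nlinarith) hu.2 hu.1 (by nlinarith)
    have h2 : (m x - β x - αlo / c) * (αlo / c)
        ≤ (mhi - βlo - αlo / c) * (αlo / c) :=
      mul_le_mul_of_nonneg_right (by linarith) hV.le
    have h3 := mul_lt_mul_of_pos_right hS2b hV
    have e : (mhi - αlo / c + (c * (k₁ - 1) - b) * (βlo / b)) * (αlo / c)
        = (mhi - βlo - αlo / c) * (αlo / c) + (k₁ - 1) * αlo * (βlo / b) := by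
      field_simp; ring
    rw [e, zero_mul] at h3
    linarith
end

section
/- Let m̄ be any real number and let k₁ be a real number with 1 ≤ k₁ < 1 + k₀. Then the set S₂ = {(x, y) ∈ ℝ² : x > 0, y > 0, m̄ − x + (b(k₁−1) − c)·y < 0, and m̄ − y + (c(k₁−1) − b)·x < 0} is nonempty. -/
/-- For any real `m̄` and any `k₁` with `1 ≤ k₁ < 1 + k₀` (`k₀` the larger root
of `(b·x − c)·(c·x − b) = 1`), the set
`S₂ = {(x,y) : x > 0, y > 0, m̄ − x + (b(k₁−1) − c)·y < 0, m̄ − y + (c(k₁−1) − b)·x < 0}`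
is nonempty. -/
theorem stmt_7 (b c : ℝ) (hb : 0 < b) (hc : 0 < c)
    (k₀ : ℝ) (hroot : (b * k₀ - c) * (c * k₀ - b) = 1)
    (hlargest : ∀ x : ℝ, (b * x - c) * (c * x - b) = 1 → x ≤ k₀)
    (mhi : ℝ) (k₁ : ℝ) (hk₁le : 1 ≤ k₁) (hk₁lt : k₁ < 1 + k₀) :
    {p : ℝ × ℝ | 0 < p.1 ∧ 0 < p.2 ∧
        mhi - p.1 + (b * (k₁ - 1) - c) * p.2 < 0 ∧
        mhi - p.2 + (c * (k₁ - 1) - b) * p.1 < 0}.Nonempty := by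
  set t : ℝ := k₁ - 1 with ht
  have ht0 : 0 ≤ t := by linarith
  have htk : t < k₀ := by linarith
  set A : ℝ := b * t - c with hA
  set C : ℝ := c * t - b with hC
  have habs : mhi < |mhi| + 1 := by
    have := le_abs_self mhi; linarith
  have habs0 : (0:ℝ) < |mhi| + 1 := by positivity
  rcases le_or_gt A 0 with hA0 | hA0
  · refine ⟨(|mhi| + 1, |mhi| + |C| * (|mhi| + 1) + 1), ?_, ?_, ?_, ?_⟩
    · exact habs0
    · have : 0 ≤ |C| * (|mhi| + 1) := by positivity
      have := abs_nonneg mhi; simp only []; linarith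
    · have hy : (0:ℝ) < |mhi| + |C| * (|mhi| + 1) + 1 := by positivity
      have : A * (|mhi| + |C| * (|mhi| + 1) + 1) ≤ 0 :=
        mul_nonpos_of_nonpos_of_nonneg hA0 (le_of_lt hy)
      simp only []; linarith
    · have h1 : C * (|mhi| + 1) ≤ |C| * (|mhi| + 1) :=
        mul_le_mul_of_nonneg_right (le_abs_self C) (le_of_lt habs0)
      have := le_abs_self mhi
      simp only []; linarith
  rcases le_or_gt C 0 with hC0 | hC0
  · refine ⟨(|mhi| + |A| * (|mhi| + 1) + 1, |mhi| + 1), ?_, ?_, ?_, ?_⟩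
    · have : 0 ≤ |A| * (|mhi| + 1) := by positivity
      have := abs_nonneg mhi; simp only []; linarith
    · exact habs0
    · have h1 : A * (|mhi| + 1) ≤ |A| * (|mhi| + 1) :=
        mul_le_mul_of_nonneg_right (le_abs_self A) (le_of_lt habs0)
      have := le_abs_self mhi
      simp only []; linarith
    · have hx : (0:ℝ) < |mhi| + |A| * (|mhi| + 1) + 1 := by positivity
      have : C * (|mhi| + |A| * (|mhi| + 1) + 1) ≤ 0 :=
        mul_nonpos_of_nonpos_of_nonneg hC0 (le_of_lt hx)
      simp only []; linarith
  -- hard case: A > 0, C > 0; show A * C < 1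
  have hAC : A * C < 1 := by
    have hr : (b * ((b^2 + c^2)/(b*c) - k₀) - c) * (c * ((b^2 + c^2)/(b*c) - k₀) - b) = 1 := by
      have hbc : b * c ≠ 0 := by positivity
      have hbne : b ≠ 0 := ne_of_gt hb
      have hcne : c ≠ 0 := ne_of_gt hc
      field_simp
      linear_combination (b * c) * hroot
    have hrk := hlargest _ hr
    -- from hrk : (b²+c²)/(bc) - k₀ ≤ k₀, get b²+c² ≤ 2bc k₀
    have hS : b^2 + c^2 ≤ 2 * (b*c) * k₀ := by
      have hbc : (0:ℝ) < b * c := by positivity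
      have := (div_le_iff₀ hbc).mp (by linarith : (b^2 + c^2)/(b*c) ≤ 2 * k₀)
      linarith
    -- from A>0, C>0: 2 bc t > b² + c²
    have htm : b^2 + c^2 < 2 * (b*c) * t := by
      have h1 : b * (b * t) > b * c := by
        have : b * t > c := by simp only [hA] at hA0; linarith
        nlinarith
      have h2 : c * (c * t) > c * b := by
        have : c * t > b := by simp only [hC] at hC0; linarith
        nlinarith
      nlinarith
    have key : A * C - 1 = (t - k₀) * (b*c*(t + k₀) - (b^2 + c^2)) := by
      simp only [hA, hC]
      linear_combination hroot
    have hpos : 0 < b*c*(t + k₀) - (b^2 + c^2) := by nlinarith [htm, hS]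
    have hneg := mul_neg_of_neg_of_pos (by linarith : t - k₀ < 0) hpos
    linarith [key]
  -- pick λ = (C + 1/A)/2
  set lam : ℝ := (C + 1/A) / 2 with hlam
  have hAinv : 0 < 1/A := by positivity
  have hCl : C < 1/A := by
    rw [lt_div_iff₀ hA0, mul_comm]; exact hAC
  have hlC : C < lam := by simp only [hlam]; linarith
  have hlpos : 0 < lam := lt_trans hC0 hlC
  have hAl : A * lam < 1 := by
    have : lam < 1/A := by simp only [hlam]; linarith
    calc A * lam < A * (1/A) := by exact mul_lt_mul_of_pos_left this hA0
    _ = 1 := by field_simp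
  set d : ℝ := min (1 - A * lam) (lam - C) with hd
  have hdpos : 0 < d := lt_min (by linarith) (by linarith)
  set x : ℝ := (|mhi| + 1) / d with hx
  have hxpos : 0 < x := by positivity
  have hdx : d * x = |mhi| + 1 := by
    rw [hx]; field_simp [hdpos.ne']
  refine ⟨(x, lam * x), hxpos, by positivity, ?_, ?_⟩
  · have h1 : d ≤ 1 - A * lam := min_le_left _ _
    have h2 : d * x ≤ (1 - A * lam) * x := mul_le_mul_of_nonneg_right h1 (le_of_lt hxpos)
    have h3 : A * (lam * x) = x - (1 - A * lam) * x := by ring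
    simp only []
    linarith [hdx, habs, h2, h3]
  · have h1 : d ≤ lam - C := min_le_right _ _
    have h2 : d * x ≤ (lam - C) * x := mul_le_mul_of_nonneg_right h1 (le_of_lt hxpos)
    have h3 : C * x = lam * x - (lam - C) * x := by ring
    simp only []
    linarith [hdx, habs, h2, h3]
end
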